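/- If |a| = n, then ∏_{i=1}^{n} L_i(q) = (∏_{k=1}^{n} α_k)/(1 − a^a q) in ℚ_α[[q]], and consequently ∑_{i=1}^{n} L_i′(q)/L_i(q) = a^a/(1 − a^a q), where ′ denotes the formal derivative with respect to q. -/

import Mathlib

/-!
Setting: `Kf n = ℚ_α = ℚ(α₁,…,αₙ)` is the field of rational functions in `n` variables over
`ℚ` (in which the `αᵢ` are pairwise distinct).  For a tuple `a : Fin l → ℤ` of nonzero
integers with `|a| = ∑|a_k| ≤ n` and `a^a = ∏ a_k^{|a_k|}`, the power series
`L_i ∈ ℚ_α[[q]]` is characterized by having constant term `αᵢ` and satisfying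
`∏ₖ(L_i − αₖ) = q·a^a·L_i^{|a|}`.
-/

noncomputable section

namespace SQ

/-- The field `ℚ_α = ℚ(α₁,…,αₙ)`. -/
abbrev Kf (n : ℕ) : Type := FractionRing (MvPolynomial (Fin n) ℚ)

/-- The element `αᵢ ∈ ℚ_α`. -/
def alpha (n : ℕ) (i : Fin n) : Kf n :=
  algebraMap (MvPolynomial (Fin n) ℚ) (Kf n) (MvPolynomial.X i)

/-- `|a| = ∑ |a_k|`. -/
def absSum (l : ℕ) (a : Fin l → ℤ) : ℕ := ∑ k : Fin l, (a k).natAbs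

/-- `a^a = ∏ a_k^{|a_k|}`, as an element of `ℚ_α`. -/
def aPow (n l : ℕ) (a : Fin l → ℤ) : Kf n := ((∏ k : Fin l, a k ^ (a k).natAbs : ℤ) : Kf n)

/-- The defining property of `L_i ∈ ℚ_α[[q]]`: constant term `αᵢ` and
`∏ₖ(L − αₖ) = q·a^a·L^{|a|}`. -/
def IsLSeries (n l : ℕ) (a : Fin l → ℤ) (i : Fin n) (L : PowerSeries (Kf n)) : Prop :=
  PowerSeries.constantCoeff L = alpha n i ∧
    ∏ k : Fin n, (L - PowerSeries.C (alpha n k))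
      = PowerSeries.X * PowerSeries.C (aPow n l a) * L ^ absSum l a

/-- The formal derivative with respect to `q` of a power series. -/
def psDeriv (n : ℕ) (f : PowerSeries (Kf n)) : PowerSeries (Kf n) :=
  PowerSeries.mk fun d => ((d : Kf n) + 1) * PowerSeries.coeff (d + 1) f

-- auxiliary lemmas

lemma alpha_injective (n : ℕ) : Function.Injective (alpha n) := fun i j h => by
  have := IsFractionRing.injective (MvPolynomial (Fin n) ℚ) (Kf n) h
  exact MvPolynomial.X_injective this

lemma alpha_ne_zero (n : ℕ) (i : Fin n) : alpha n i ≠ 0 := by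
  unfold alpha
  rw [map_ne_zero_iff _ (IsFractionRing.injective (MvPolynomial (Fin n) ℚ) (Kf n))]
  exact MvPolynomial.X_ne_zero i

lemma psDeriv_eq (n : ℕ) (f : PowerSeries (Kf n)) :
    psDeriv n f = PowerSeries.derivative (Kf n) f := by
  ext d
  rw [PowerSeries.coeff_derivative]
  simp [psDeriv]
  ring

open PowerSeries in
lemma sum_logDeriv {k : Type} [Field k] {ι : Type} (s : Finset ι) (f : ι → PowerSeries k)
    (h : ∀ i ∈ s, constantCoeff (f i) ≠ 0) :
    (derivative k (∏ i ∈ s, f i)) * (∏ i ∈ s, f i)⁻¹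
      = ∑ i ∈ s, (derivative k (f i)) * (f i)⁻¹ := by
  classical
  induction s using Finset.induction with
  | empty => simp
  | @insert a s ha ih =>
    have hfa : constantCoeff (f a) ≠ 0 := h a (Finset.mem_insert_self a s)
    have hP : constantCoeff (∏ i ∈ s, f i) ≠ 0 := by
      rw [map_prod]
      exact Finset.prod_ne_zero_iff.2 fun i hi => h i (Finset.mem_insert_of_mem hi)
    have ih' := ih fun i hi => h i (Finset.mem_insert_of_mem hi)
    rw [Finset.prod_insert ha, Finset.sum_insert ha, Derivation.leibniz,
      PowerSeries.mul_inv_rev, ← ih']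
    have h1 : f a * (f a)⁻¹ = 1 := PowerSeries.mul_inv_cancel _ hfa
    have h2 : (∏ i ∈ s, f i) * (∏ i ∈ s, f i)⁻¹ = 1 := PowerSeries.mul_inv_cancel _ hP
    set P := ∏ i ∈ s, f i
    set dP := derivative k P
    set dfa := derivative k (f a)
    rw [smul_eq_mul, smul_eq_mul]
    linear_combination (dP * P⁻¹) * h1 + (dfa * (f a)⁻¹) * h2

set_option maxHeartbeats 800000 in
/-- if `|a| = n`, then `∏ᵢ L_i(q) = (∏ₖ αₖ)/(1 − a^a q)` in `ℚ_α[[q]]`, and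
consequently `∑ᵢ L_i′(q)/L_i(q) = a^a/(1 − a^a q)`. -/
theorem statement16 (n l : ℕ) (hn : 1 ≤ n) (a : Fin l → ℤ) (ha : ∀ k, a k ≠ 0)
    (hm : absSum l a ≤ n)
    (L : Fin n → PowerSeries (Kf n)) (hL : ∀ i : Fin n, IsLSeries n l a i (L i))
    (hmn : absSum l a = n) :
    ∏ i : Fin n, L i
        = PowerSeries.C (∏ k : Fin n, alpha n k)
            * (1 - PowerSeries.C (aPow n l a) * PowerSeries.X)⁻¹ ∧
    ∑ i : Fin n, psDeriv n (L i) * (L i)⁻¹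
        = PowerSeries.C (aPow n l a)
            * (1 - PowerSeries.C (aPow n l a) * PowerSeries.X)⁻¹ := by
  classical
  set A : PowerSeries (Kf n) := PowerSeries.C (aPow n l a) with hA
  set qA : PowerSeries (Kf n) := A * PowerSeries.X with hqA
  set u : PowerSeries (Kf n) := 1 - qA with hu
  -- the polynomials
  set M : Polynomial (PowerSeries (Kf n)) :=
    ∏ k : Fin n, (Polynomial.X - Polynomial.C (PowerSeries.C (alpha n k))) with hM
  set Q : Polynomial (PowerSeries (Kf n)) :=
    ∏ i : Fin n, (Polynomial.X - Polynomial.C (L i)) with hQ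
  set D : Polynomial (PowerSeries (Kf n)) :=
    (M - Q) + Polynomial.C qA * (Q - Polynomial.X ^ n) with hD
  have hMmonic : M.Monic := Polynomial.monic_prod_of_monic _ _ fun k _ => Polynomial.monic_X_sub_C _
  have hQmonic : Q.Monic := Polynomial.monic_prod_of_monic _ _ fun k _ => Polynomial.monic_X_sub_C _
  have hMdeg : M.natDegree = n := by
    rw [hM, Polynomial.natDegree_prod_of_monic _ _ fun k _ => Polynomial.monic_X_sub_C _]
    simp [Polynomial.natDegree_X_sub_C]
  have hQdeg : Q.natDegree = n := by
    rw [hQ, Polynomial.natDegree_prod_of_monic _ _ fun k _ => Polynomial.monic_X_sub_C _]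
    simp [Polynomial.natDegree_X_sub_C]
  have hMd : M.degree = (n : WithBot ℕ) := by
    rw [Polynomial.degree_eq_natDegree hMmonic.ne_zero, hMdeg]
  have hQd : Q.degree = (n : WithBot ℕ) := by
    rw [Polynomial.degree_eq_natDegree hQmonic.ne_zero, hQdeg]
  -- evals at L i vanish
  have hLinj : Function.Injective L := by
    intro i j hij
    apply alpha_injective n
    rw [← (hL i).1, ← (hL j).1, hij]
  have hMeval : ∀ i, M.eval (L i) = qA * (L i) ^ n := by
    intro i
    have := (hL i).2
    rw [hmn] at this
    rw [hM, Polynomial.eval_prod]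
    simp only [Polynomial.eval_sub, Polynomial.eval_X, Polynomial.eval_C]
    rw [this, hqA]
    ring
  have hQeval : ∀ i, Q.eval (L i) = 0 := by
    intro i
    rw [hQ, Polynomial.eval_prod]
    apply Finset.prod_eq_zero (Finset.mem_univ i)
    simp
  have hDeval : ∀ i, D.eval (L i) = 0 := by
    intro i
    simp only [hD, Polynomial.eval_add, Polynomial.eval_sub, Polynomial.eval_mul,
      Polynomial.eval_C, Polynomial.eval_pow, Polynomial.eval_X, hMeval i, hQeval i]
    ring
  have hDdeg : D.degree < (n : WithBot ℕ) := by
    have h1 : (M - Q).degree < (n : WithBot ℕ) := by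
      have := Polynomial.degree_sub_lt (hMd.trans hQd.symm) hMmonic.ne_zero
        (by rw [hMmonic.leadingCoeff, hQmonic.leadingCoeff])
      rwa [hMd] at this
    have h2 : (Q - Polynomial.X ^ n).degree < (n : WithBot ℕ) := by
      have := Polynomial.degree_sub_lt (hQd.trans (Polynomial.degree_X_pow n).symm)
        hQmonic.ne_zero
        (by rw [hQmonic.leadingCoeff, (Polynomial.monic_X_pow (R := PowerSeries (Kf n)) (n := n)).leadingCoeff])
      rwa [hQd] at this
    have h3 : (Polynomial.C qA * (Q - Polynomial.X ^ n)).degree < (n : WithBot ℕ) := by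
      calc (Polynomial.C qA * (Q - Polynomial.X ^ n)).degree
          ≤ (Polynomial.C qA).degree + (Q - Polynomial.X ^ n).degree :=
            Polynomial.degree_mul_le _ _
        _ ≤ 0 + (Q - Polynomial.X ^ n).degree := by
            exact add_le_add Polynomial.degree_C_le le_rfl
        _ = (Q - Polynomial.X ^ n).degree := by rw [zero_add]
        _ < (n : WithBot ℕ) := h2
    exact lt_of_le_of_lt (Polynomial.degree_add_le _ _) (max_lt h1 h3)
  have hD0 : D = 0 := by
    by_cases hz : D = 0
    · exact hz
    · refine Polynomial.eq_zero_of_natDegree_lt_card_of_eval_eq_zero D hLinj hDeval ?_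
      rw [Fintype.card_fin]
      exact (Polynomial.natDegree_lt_iff_degree_lt (n := n) hz).2 hDdeg
  -- P = C u * Q
  have hPQ : M - Polynomial.C qA * Polynomial.X ^ n = Polynomial.C u * Q := by
    have : M - Polynomial.C qA * Polynomial.X ^ n - Polynomial.C u * Q = D := by
      rw [hD, hu, map_sub, map_one]
      ring
    rw [hD0] at this
    exact sub_eq_zero.mp this
  -- evaluate at 0
  have hM0 : M.eval 0 = (-1 : PowerSeries (Kf n)) ^ n * PowerSeries.C (∏ k : Fin n, alpha n k) := by
    rw [hM, Polynomial.eval_prod]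
    simp only [Polynomial.eval_sub, Polynomial.eval_X, Polynomial.eval_C, zero_sub]
    calc ∏ k : Fin n, -(PowerSeries.C (alpha n k))
        = ∏ k : Fin n, ((-1 : PowerSeries (Kf n)) * PowerSeries.C (alpha n k)) := by
          simp [neg_one_mul]
      _ = (∏ _k : Fin n, (-1 : PowerSeries (Kf n))) * ∏ k : Fin n, PowerSeries.C (alpha n k) :=
          Finset.prod_mul_distrib
      _ = (-1 : PowerSeries (Kf n)) ^ n * PowerSeries.C (∏ k : Fin n, alpha n k) := by
          rw [Finset.prod_const, Finset.card_univ, Fintype.card_fin, ← map_prod]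
  have hQ0 : Q.eval 0 = (-1 : PowerSeries (Kf n)) ^ n * ∏ i : Fin n, L i := by
    rw [hQ, Polynomial.eval_prod]
    simp only [Polynomial.eval_sub, Polynomial.eval_X, Polynomial.eval_C, zero_sub]
    calc ∏ i : Fin n, -(L i)
        = ∏ i : Fin n, ((-1 : PowerSeries (Kf n)) * L i) := by simp [neg_one_mul]
      _ = (∏ _i : Fin n, (-1 : PowerSeries (Kf n))) * ∏ i : Fin n, L i := Finset.prod_mul_distrib
      _ = (-1 : PowerSeries (Kf n)) ^ n * ∏ i : Fin n, L i := by
          rw [Finset.prod_const, Finset.card_univ, Fintype.card_fin]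
  have key : u * ∏ i : Fin n, L i = PowerSeries.C (∏ k : Fin n, alpha n k) := by
    have h := congrArg (Polynomial.eval (0 : PowerSeries (Kf n))) hPQ
    simp only [Polynomial.eval_sub, Polynomial.eval_mul, Polynomial.eval_C,
      Polynomial.eval_pow, Polynomial.eval_X, hM0, hQ0] at h
    rw [zero_pow (by omega : n ≠ 0), mul_zero, sub_zero] at h
    have hne : ((-1 : PowerSeries (Kf n)) ^ n) ≠ 0 := pow_ne_zero _ (neg_ne_zero.mpr (one_ne_zero (α := PowerSeries (Kf n))))
    apply mul_left_cancel₀ hne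
    rw [h]; ring
  have hu0 : PowerSeries.constantCoeff u ≠ 0 := by
    rw [hu, hqA, hA]
    simp
  have hF0 : PowerSeries.constantCoeff (∏ i : Fin n, L i) ≠ 0 := by
    rw [map_prod]
    refine Finset.prod_ne_zero_iff.2 fun i _ => ?_
    rw [(hL i).1]
    exact alpha_ne_zero n i
  constructor
  · rw [PowerSeries.eq_mul_inv_iff_mul_eq hu0, mul_comm]
    exact key
  · -- second part
    set F : PowerSeries (Kf n) := ∏ i : Fin n, L i with hF
    have hdu : PowerSeries.derivative (Kf n) u = -A := by
      rw [hu, hqA, hA, map_sub]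
      simp [Derivation.leibniz, smul_eq_mul]
    have hkey2 : u * PowerSeries.derivative (Kf n) F = A * F := by
      have h0 : u • PowerSeries.derivative (Kf n) F + F • PowerSeries.derivative (Kf n) u = 0 := by
        rw [← Derivation.leibniz, key, PowerSeries.derivative_C]
      rw [hdu, smul_eq_mul, smul_eq_mul] at h0
      linear_combination h0
    have hsum : ∑ i : Fin n, psDeriv n (L i) * (L i)⁻¹
        = PowerSeries.derivative (Kf n) F * F⁻¹ := by
      simp_rw [psDeriv_eq]
      rw [sum_logDeriv Finset.univ L (fun i _ => by rw [(hL i).1]; exact alpha_ne_zero n i)]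
    rw [hsum]
    calc PowerSeries.derivative (Kf n) F * F⁻¹
        = (u⁻¹ * u) * (PowerSeries.derivative (Kf n) F * F⁻¹) := by
          rw [PowerSeries.inv_mul_cancel _ hu0, one_mul]
      _ = u⁻¹ * ((u * PowerSeries.derivative (Kf n) F) * F⁻¹) := by ring
      _ = u⁻¹ * ((A * F) * F⁻¹) := by rw [hkey2]
      _ = A * u⁻¹ * (F * F⁻¹) := by ring
      _ = A * u⁻¹ := by rw [PowerSeries.mul_inv_cancel _ hF0, mul_one]


end SQ
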